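/- Let R be a commutative strongly ℤ-graded ring with grading 𝒜. Let Y⁻ be an R_{≤0}-module, Y⁰ an R-module, Y⁺ an R_{≥0}-module, υ⁻ : Y⁻ → Y⁰ an R_{≤0}-linear map and υ⁺ : Y⁺ → Y⁰ an R_{≥0}-linear map. For k, ℓ ∈ ℤ define the (k,ℓ)-twisted difference map D_{k,ℓ} : (Y⁻ ⊗[R_{≤0}] R_{≤k}) × (Y⁺ ⊗[R_{≥0}] R_{≥−ℓ}) → Y⁰ by (y ⊗ r, z ⊗ s) ↦ r • υ⁻(y) − s • υ⁺(z). If k, ℓ, k′, ℓ′ ∈ ℤ satisfy k + ℓ = k′ + ℓ′, then the kernel of D_{k,ℓ} is zero if and only if the kernel of D_{k′,ℓ′} is zero, and D_{k,ℓ} is surjective if and only if D_{k′,ℓ′} is surjective. -/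

import Mathlib

open TensorProduct

universe u

/-- A ℤ-graded ring is *strongly graded* if `𝒜 i * 𝒜 j = 𝒜 (i + j)` for all `i j`. -/
def IsStronglyGraded {R : Type*} [Ring R] (𝒜 : ℤ → Submodule ℤ R) : Prop :=
  ∀ i j : ℤ, 𝒜 i * 𝒜 j = 𝒜 (i + j)

variable {R : Type*} [CommRing R] (𝒜 : ℤ → Submodule ℤ R) [GradedRing 𝒜]

/-- `R_{≤k}`, the sum of the homogeneous components of degree at most `k`. -/
def Rle (k : ℤ) : Submodule ℤ R := ⨆ n ≤ k, 𝒜 n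

/-- `R_{≥k}`, the sum of the homogeneous components of degree at least `k`. -/
def Rge (k : ℤ) : Submodule ℤ R := ⨆ n ≥ k, 𝒜 n

theorem Rle_mul_Rle (a b : ℤ) : Rle 𝒜 a * Rle 𝒜 b ≤ Rle 𝒜 (a + b) := by
  rw [Rle, Rle, Submodule.iSup_mul]
  refine iSup_le fun n => ?_
  rw [Submodule.iSup_mul]
  refine iSup_le fun hn => ?_
  rw [Submodule.mul_iSup]
  refine iSup_le fun m => ?_
  rw [Submodule.mul_iSup]
  refine iSup_le fun hm => ?_
  refine le_trans (Submodule.mul_le.2 fun x hx y hy => SetLike.mul_mem_graded hx hy) ?_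
  exact le_iSup₂_of_le (n + m) (add_le_add hn hm) le_rfl

theorem Rge_mul_Rge (a b : ℤ) : Rge 𝒜 a * Rge 𝒜 b ≤ Rge 𝒜 (a + b) := by
  rw [Rge, Rge, Submodule.iSup_mul]
  refine iSup_le fun n => ?_
  rw [Submodule.iSup_mul]
  refine iSup_le fun hn => ?_
  rw [Submodule.mul_iSup]
  refine iSup_le fun m => ?_
  rw [Submodule.mul_iSup]
  refine iSup_le fun hm => ?_
  refine le_trans (Submodule.mul_le.2 fun x hx y hy => SetLike.mul_mem_graded hx hy) ?_
  exact le_iSup₂_of_le (n + m) (add_le_add hn hm) le_rfl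

theorem grade_mem_Rle {k : ℤ} {x : R} (hx : x ∈ 𝒜 k) : x ∈ Rle 𝒜 k :=
  Submodule.mem_iSup_of_mem k (Submodule.mem_iSup_of_mem le_rfl hx)

theorem grade_mem_Rge {k : ℤ} {x : R} (hx : x ∈ 𝒜 k) : x ∈ Rge 𝒜 k :=
  Submodule.mem_iSup_of_mem k (Submodule.mem_iSup_of_mem le_rfl hx)

/-- The subring `R_{≤0}` of `R`. -/
def RleSubring : Subring R where
  carrier := Rle 𝒜 0
  zero_mem' := zero_mem _
  add_mem' := fun h1 h2 => add_mem h1 h2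
  neg_mem' := fun h => neg_mem h
  one_mem' := grade_mem_Rle 𝒜 (SetLike.one_mem_graded 𝒜)
  mul_mem' := fun h1 h2 => by
    simpa using Rle_mul_Rle 𝒜 0 0 (Submodule.mul_mem_mul h1 h2)

/-- The subring `R_{≥0}` of `R`. -/
def RgeSubring : Subring R where
  carrier := Rge 𝒜 0
  zero_mem' := zero_mem _
  add_mem' := fun h1 h2 => add_mem h1 h2
  neg_mem' := fun h => neg_mem h
  one_mem' := grade_mem_Rge 𝒜 (SetLike.one_mem_graded 𝒜)
  mul_mem' := fun h1 h2 => by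
    simpa using Rge_mul_Rge 𝒜 0 0 (Submodule.mul_mem_mul h1 h2)

/-- The inclusion of the subring `𝒜 0` into `R`. -/
def incl0 : (𝒜 0) →+* R where
  toFun a := (a : R)
  map_one' := rfl
  map_mul' _ _ := rfl
  map_zero' := rfl
  map_add' _ _ := rfl

/-- The inclusion of the subring `𝒜 0` into the subring `R_{≤0}`. -/
def incl0le : (𝒜 0) →+* RleSubring 𝒜 where
  toFun a := ⟨(a : R), grade_mem_Rle 𝒜 a.2⟩
  map_one' := rfl
  map_mul' _ _ := rfl
  map_zero' := rfl
  map_add' _ _ := rfl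

/-- The inclusion of the subring `𝒜 0` into the subring `R_{≥0}`. -/
def incl0ge : (𝒜 0) →+* RgeSubring 𝒜 where
  toFun a := ⟨(a : R), grade_mem_Rge 𝒜 a.2⟩
  map_one' := rfl
  map_mul' _ _ := rfl
  map_zero' := rfl
  map_add' _ _ := rfl

/-- Restriction of scalars along `𝒜 0 → R`. -/
instance restrictFromR (M : Type u) [AddCommMonoid M] [Module R M] :
    Module (𝒜 0) M :=
  Module.compHom M (incl0 𝒜)

/-- Restriction of scalars along `𝒜 0 → R_{≤0}`. -/
instance restrictFromRle (M : Type u) [AddCommMonoid M] [Module (RleSubring 𝒜) M] :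
    Module (𝒜 0) M :=
  Module.compHom M (incl0le 𝒜)

/-- Restriction of scalars along `𝒜 0 → R_{≥0}`. -/
instance restrictFromRge (M : Type u) [AddCommMonoid M] [Module (RgeSubring 𝒜) M] :
    Module (𝒜 0) M :=
  Module.compHom M (incl0ge 𝒜)

/-- Restriction of scalars along `R_{≤0} → R`. -/
instance moduleRleOfR (M : Type u) [AddCommMonoid M] [Module R M] :
    Module (RleSubring 𝒜) M :=
  Module.compHom M (RleSubring 𝒜).subtype

/-- Restriction of scalars along `R_{≥0} → R`. -/
instance moduleRgeOfR (M : Type u) [AddCommMonoid M] [Module R M] :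
    Module (RgeSubring 𝒜) M :=
  Module.compHom M (RgeSubring 𝒜).subtype

/-- The homogeneous component `𝒜 n` is a module over the subring `𝒜 0`,
with the action given by multiplication in `R`. -/
instance gradeLeftModule (n : ℤ) : Module (𝒜 0) (𝒜 n) where
  smul a x := ⟨(a : R) * x, by simpa using SetLike.mul_mem_graded a.2 x.2⟩
  one_smul x := Subtype.ext (one_mul _)
  mul_smul a b x := Subtype.ext (mul_assoc _ _ _)
  smul_zero a := Subtype.ext (mul_zero _)
  smul_add a x y := Subtype.ext (mul_add _ _ _)
  add_smul a b x := Subtype.ext (add_mul _ _ _)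
  zero_smul x := Subtype.ext (zero_mul _)

/-- `R_{≤k}` is a module over the subring `R_{≤0}`, the action being
multiplication in `R`. -/
instance RleModule (k : ℤ) : Module (RleSubring 𝒜) (Rle 𝒜 k) where
  smul s x := ⟨(s : R) * x, by
    simpa using Rle_mul_Rle 𝒜 0 k (Submodule.mul_mem_mul s.2 x.2)⟩
  one_smul x := Subtype.ext (one_mul _)
  mul_smul a b x := Subtype.ext (mul_assoc _ _ _)
  smul_zero a := Subtype.ext (mul_zero _)
  smul_add a x y := Subtype.ext (mul_add _ _ _)
  add_smul a b x := Subtype.ext (add_mul _ _ _)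
  zero_smul x := Subtype.ext (zero_mul _)

/-- `R_{≥k}` is a module over the subring `R_{≥0}`, the action being
multiplication in `R`. -/
instance RgeModule (k : ℤ) : Module (RgeSubring 𝒜) (Rge 𝒜 k) where
  smul s x := ⟨(s : R) * x, by
    simpa using Rge_mul_Rge 𝒜 0 k (Submodule.mul_mem_mul s.2 x.2)⟩
  one_smul x := Subtype.ext (one_mul _)
  mul_smul a b x := Subtype.ext (mul_assoc _ _ _)
  smul_zero a := Subtype.ext (mul_zero _)
  smul_add a x y := Subtype.ext (mul_add _ _ _)
  add_smul a b x := Subtype.ext (add_mul _ _ _)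
  zero_smul x := Subtype.ext (zero_mul _)

theorem exists_decomp (h : IsStronglyGraded 𝒜) (d : ℤ) :
    ∃ (n : ℕ) (a : Fin n → (𝒜 d)) (b : Fin n → (𝒜 (-d))),
      (∑ i, (a i : R) * (b i : R)) = 1 := by
  have h1 : (1 : R) ∈ 𝒜 d * 𝒜 (-d) := by
    rw [h d (-d), add_neg_cancel]
    exact SetLike.one_mem_graded 𝒜
  exact Submodule.mul_induction_on
    (C := fun r => ∃ (n : ℕ) (a : Fin n → (𝒜 d)) (b : Fin n → (𝒜 (-d))),
      (∑ i, (a i : R) * (b i : R)) = r) h1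
    (fun m hm p hp => ⟨1, fun _ => ⟨m, hm⟩, fun _ => ⟨p, hp⟩, by simp⟩)
    (by
      rintro x y ⟨n1, a1, b1, h1'⟩ ⟨n2, a2, b2, h2'⟩
      refine ⟨n1 + n2, Fin.append a1 a2, Fin.append b1 b2, ?_⟩
      rw [Fin.sum_univ_add]
      simp only [Fin.append_left, Fin.append_right]
      rw [h1', h2'])

/-- Multiplication by a homogeneous element of degree `k' - k`, as an
`R_{≤0}`-linear map `R_{≤k} → R_{≤k'}`. -/
def mulLe (k k' : ℤ) (a : R) (ha : a ∈ 𝒜 (k' - k)) :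
    Rle 𝒜 k →ₗ[RleSubring 𝒜] Rle 𝒜 k' where
  toFun r := ⟨(r : R) * a, by
    have := Rle_mul_Rle 𝒜 k (k' - k) (Submodule.mul_mem_mul r.2 (grade_mem_Rle 𝒜 ha))
    simpa using this⟩
  map_add' x y := Subtype.ext (add_mul _ _ _)
  map_smul' s x := Subtype.ext (mul_assoc _ _ _)

@[simp] theorem mulLe_coe (k k' : ℤ) (a : R) (ha : a ∈ 𝒜 (k' - k)) (r : Rle 𝒜 k) :
    ((mulLe 𝒜 k k' a ha r : Rle 𝒜 k') : R) = (r : R) * a := rfl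

/-- Multiplication by a homogeneous element of degree `m' - m`, as an
`R_{≥0}`-linear map `R_{≥m} → R_{≥m'}`. -/
def mulGe (m m' : ℤ) (a : R) (ha : a ∈ 𝒜 (m' - m)) :
    Rge 𝒜 m →ₗ[RgeSubring 𝒜] Rge 𝒜 m' where
  toFun r := ⟨(r : R) * a, by
    have := Rge_mul_Rge 𝒜 m (m' - m) (Submodule.mul_mem_mul r.2 (grade_mem_Rge 𝒜 ha))
    simpa using this⟩
  map_add' x y := Subtype.ext (add_mul _ _ _)
  map_smul' s x := Subtype.ext (mul_assoc _ _ _)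

@[simp] theorem mulGe_coe (m m' : ℤ) (a : R) (ha : a ∈ 𝒜 (m' - m)) (r : Rge 𝒜 m) :
    ((mulGe 𝒜 m m' a ha r : Rge 𝒜 m') : R) = (r : R) * a := rfl
variable (Yneg Ypos : Type u) [AddCommGroup Yneg] [AddCommGroup Ypos]
  [Module (RleSubring 𝒜) Yneg] [Module (RgeSubring 𝒜) Ypos]

/-- The `(k,ℓ) → (k',ℓ')` transfer map induced by a homogeneous element `a`. -/
noncomputable def PhiMap (k l k' l' : ℤ) (a : R) (ha : a ∈ 𝒜 (k' - k)) (ha' : a ∈ 𝒜 (-l' - -l)) :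
    ((Yneg ⊗[RleSubring 𝒜] Rle 𝒜 k) × (Ypos ⊗[RgeSubring 𝒜] Rge 𝒜 (-l))) →ₗ[𝒜 0]
    ((Yneg ⊗[RleSubring 𝒜] Rle 𝒜 k') × (Ypos ⊗[RgeSubring 𝒜] Rge 𝒜 (-l'))) where
  toFun x := (LinearMap.lTensor Yneg (mulLe 𝒜 k k' a ha) x.1,
              LinearMap.lTensor Ypos (mulGe 𝒜 (-l) (-l') a ha') x.2)
  map_add' x y := by
    simp only [Prod.fst_add, Prod.snd_add, map_add, Prod.mk_add_mk]
  map_smul' c x := by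
    refine Prod.ext ?_ ?_
    · show LinearMap.lTensor Yneg (mulLe 𝒜 k k' a ha) ((incl0le 𝒜 c) • x.1)
        = (incl0le 𝒜 c) • LinearMap.lTensor Yneg (mulLe 𝒜 k k' a ha) x.1
      rw [map_smul]
    · show LinearMap.lTensor Ypos (mulGe 𝒜 (-l) (-l') a ha') ((incl0ge 𝒜 c) • x.2)
        = (incl0ge 𝒜 c) • LinearMap.lTensor Ypos (mulGe 𝒜 (-l) (-l') a ha') x.2
      rw [map_smul]
variable (Yzero : Type u) [AddCommGroup Yzero] [Module R Yzero]

theorem D_PhiMap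
    (υneg : Yneg →ₗ[RleSubring 𝒜] Yzero) (υpos : Ypos →ₗ[RgeSubring 𝒜] Yzero)
    (k l k' l' : ℤ) (a : R) (ha : a ∈ 𝒜 (k' - k)) (ha' : a ∈ 𝒜 (-l' - -l))
    (D : ((Yneg ⊗[RleSubring 𝒜] Rle 𝒜 k) × (Ypos ⊗[RgeSubring 𝒜] Rge 𝒜 (-l))) →ₗ[𝒜 0] Yzero)
    (hD : ∀ (y : Yneg) (r : Rle 𝒜 k) (z : Ypos) (s : Rge 𝒜 (-l)),
      D (y ⊗ₜ r, z ⊗ₜ s) = (r : R) • υneg y - (s : R) • υpos z)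
    (D' : ((Yneg ⊗[RleSubring 𝒜] Rle 𝒜 k') × (Ypos ⊗[RgeSubring 𝒜] Rge 𝒜 (-l'))) →ₗ[𝒜 0] Yzero)
    (hD' : ∀ (y : Yneg) (r : Rle 𝒜 k') (z : Ypos) (s : Rge 𝒜 (-l')),
      D' (y ⊗ₜ r, z ⊗ₜ s) = (r : R) • υneg y - (s : R) • υpos z)
    (x : (Yneg ⊗[RleSubring 𝒜] Rle 𝒜 k) × (Ypos ⊗[RgeSubring 𝒜] Rge 𝒜 (-l))) :
    D' (PhiMap 𝒜 Yneg Ypos k l k' l' a ha ha' x) = a • D x := by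
  obtain ⟨u, v⟩ := x
  have claim1 : ∀ u : Yneg ⊗[RleSubring 𝒜] Rle 𝒜 k,
      D' (LinearMap.lTensor Yneg (mulLe 𝒜 k k' a ha) u, 0) = a • D (u, 0) := by
    intro u
    induction u using TensorProduct.induction_on with
    | zero => simp [Prod.mk_zero_zero]
    | tmul y r =>
      rw [LinearMap.lTensor_tmul,
        show (0 : Ypos ⊗[RgeSubring 𝒜] Rge 𝒜 (-l')) = (0 : Ypos) ⊗ₜ (0 : Rge 𝒜 (-l'))
          from (TensorProduct.zero_tmul _ _).symm,
        show (0 : Ypos ⊗[RgeSubring 𝒜] Rge 𝒜 (-l)) = (0 : Ypos) ⊗ₜ (0 : Rge 𝒜 (-l))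
          from (TensorProduct.zero_tmul _ _).symm,
        hD', hD]
      simp only [mulLe_coe, ZeroMemClass.coe_zero, zero_smul, sub_zero]
      rw [smul_smul, mul_comm]
    | add u1 u2 h1 h2 =>
      rw [map_add,
        show ∀ w1 w2 : Yneg ⊗[RleSubring 𝒜] Rle 𝒜 k',
          ((w1 + w2, (0 : Ypos ⊗[RgeSubring 𝒜] Rge 𝒜 (-l'))) : _ × _)
            = (w1, 0) + (w2, 0) from fun _ _ => by simp,
        show ((u1 + u2, (0 : Ypos ⊗[RgeSubring 𝒜] Rge 𝒜 (-l))) : _ × _)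
            = (u1, 0) + (u2, 0) from by simp,
        map_add, map_add, h1, h2, smul_add]
  have claim2 : ∀ v : Ypos ⊗[RgeSubring 𝒜] Rge 𝒜 (-l),
      D' (0, LinearMap.lTensor Ypos (mulGe 𝒜 (-l) (-l') a ha') v) = a • D (0, v) := by
    intro v
    induction v using TensorProduct.induction_on with
    | zero => simp [Prod.mk_zero_zero]
    | tmul z s =>
      rw [LinearMap.lTensor_tmul,
        show (0 : Yneg ⊗[RleSubring 𝒜] Rle 𝒜 k') = (0 : Yneg) ⊗ₜ (0 : Rle 𝒜 k')
          from (TensorProduct.zero_tmul _ _).symm,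
        show (0 : Yneg ⊗[RleSubring 𝒜] Rle 𝒜 k) = (0 : Yneg) ⊗ₜ (0 : Rle 𝒜 k)
          from (TensorProduct.zero_tmul _ _).symm,
        hD', hD]
      simp only [mulGe_coe, ZeroMemClass.coe_zero, zero_smul, zero_sub]
      rw [smul_neg, smul_smul, mul_comm]
    | add v1 v2 h1 h2 =>
      rw [map_add,
        show ∀ w1 w2 : Ypos ⊗[RgeSubring 𝒜] Rge 𝒜 (-l'),
          (((0 : Yneg ⊗[RleSubring 𝒜] Rle 𝒜 k'), w1 + w2) : _ × _)
            = (0, w1) + (0, w2) from fun _ _ => by simp,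
        show (((0 : Yneg ⊗[RleSubring 𝒜] Rle 𝒜 k), v1 + v2) : _ × _)
            = (0, v1) + (0, v2) from by simp,
        map_add, map_add, h1, h2, smul_add]
  have hsplit : ((u, v) : _ × _) = (u, 0) + (0, v) := by simp
  have hsplit' : (PhiMap 𝒜 Yneg Ypos k l k' l' a ha ha' (u, v)) =
      (LinearMap.lTensor Yneg (mulLe 𝒜 k k' a ha) u, 0)
      + (0, LinearMap.lTensor Ypos (mulGe 𝒜 (-l) (-l') a ha') v) := by
    show ((LinearMap.lTensor Yneg (mulLe 𝒜 k k' a ha) u,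
      LinearMap.lTensor Ypos (mulGe 𝒜 (-l) (-l') a ha') v) : _ × _) = _
    simp
  rw [hsplit', map_add, claim1, claim2, ← smul_add, ← map_add]
  simp
set_option synthInstance.maxHeartbeats 1000000 in
set_option maxHeartbeats 1000000 in
theorem PhiMap_comp (k l k' l' : ℤ) (a : R) (ha : a ∈ 𝒜 (k' - k)) (ha' : a ∈ 𝒜 (-l' - -l))
    (b : R) (hb : b ∈ 𝒜 (k - k')) (hb' : b ∈ 𝒜 (-l - -l'))
    (c : 𝒜 0) (hc : (c : R) = a * b)
    (x : (Yneg ⊗[RleSubring 𝒜] Rle 𝒜 k) × (Ypos ⊗[RgeSubring 𝒜] Rge 𝒜 (-l))) :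
    PhiMap 𝒜 Yneg Ypos k' l' k l b hb hb'
      (PhiMap 𝒜 Yneg Ypos k l k' l' a ha ha' x) = c • x := by
  obtain ⟨u, v⟩ := x
  refine Prod.ext ?_ ?_
  · show LinearMap.lTensor Yneg (mulLe 𝒜 k' k b hb)
      (LinearMap.lTensor Yneg (mulLe 𝒜 k k' a ha) u) = (incl0le 𝒜 c) • u
    induction u using TensorProduct.induction_on with
    | zero => simp
    | tmul y r =>
      rw [LinearMap.lTensor_tmul, LinearMap.lTensor_tmul, smul_tmul']
      rw [TensorProduct.smul_tmul]
      congr 1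
      refine Subtype.ext ?_
      show ((r : R) * a) * b = (c : R) * (r : R)
      rw [hc]; ring
    | add u1 u2 h1 h2 =>
      rw [map_add, map_add, h1, h2, smul_add]
  · show LinearMap.lTensor Ypos (mulGe 𝒜 (-l') (-l) b hb')
      (LinearMap.lTensor Ypos (mulGe 𝒜 (-l) (-l') a ha') v) = (incl0ge 𝒜 c) • v
    induction v using TensorProduct.induction_on with
    | zero => simp
    | tmul z s =>
      rw [LinearMap.lTensor_tmul, LinearMap.lTensor_tmul, smul_tmul']
      rw [TensorProduct.smul_tmul]
      congr 1
      refine Subtype.ext ?_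
      show ((s : R) * a) * b = (c : R) * (s : R)
      rw [hc]; ring
    | add v1 v2 h1 h2 =>
      rw [map_add, map_add, h1, h2, smul_add]
set_option synthInstance.maxHeartbeats 1000000 in
set_option maxHeartbeats 1000000 in
theorem transfer_aux (h : IsStronglyGraded 𝒜)
    (υneg : Yneg →ₗ[RleSubring 𝒜] Yzero) (υpos : Ypos →ₗ[RgeSubring 𝒜] Yzero)
    (k l k' l' : ℤ) (hkl : k + l = k' + l')
    (D : ((Yneg ⊗[RleSubring 𝒜] Rle 𝒜 k) × (Ypos ⊗[RgeSubring 𝒜] Rge 𝒜 (-l))) →ₗ[𝒜 0] Yzero)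
    (hD : ∀ (y : Yneg) (r : Rle 𝒜 k) (z : Ypos) (s : Rge 𝒜 (-l)),
      D (y ⊗ₜ r, z ⊗ₜ s) = (r : R) • υneg y - (s : R) • υpos z)
    (D' : ((Yneg ⊗[RleSubring 𝒜] Rle 𝒜 k') × (Ypos ⊗[RgeSubring 𝒜] Rge 𝒜 (-l'))) →ₗ[𝒜 0] Yzero)
    (hD' : ∀ (y : Yneg) (r : Rle 𝒜 k') (z : Ypos) (s : Rge 𝒜 (-l')),
      D' (y ⊗ₜ r, z ⊗ₜ s) = (r : R) • υneg y - (s : R) • υpos z) :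
    (LinearMap.ker D' = ⊥ → LinearMap.ker D = ⊥) ∧
    (Function.Surjective D → Function.Surjective D') := by
  obtain ⟨n, a, b, hab⟩ := exists_decomp 𝒜 h (k' - k)
  have ha' : ∀ t, (a t : R) ∈ 𝒜 (-l' - -l) := fun t => by
    have : -l' - -l = k' - k := by omega
    rw [this]; exact (a t).2
  have hb1 : ∀ t, (b t : R) ∈ 𝒜 (k - k') := fun t => by
    have : k - k' = -(k' - k) := by omega
    rw [this]; exact (b t).2
  have hb2 : ∀ t, (b t : R) ∈ 𝒜 (-l - -l') := fun t => by
    have : -l - -l' = -(k' - k) := by omega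
    rw [this]; exact (b t).2
  have hc0 : ∀ t, (a t : R) * (b t : R) ∈ 𝒜 0 := fun t => by
    have := SetLike.mul_mem_graded (a t).2 (b t).2
    rwa [add_neg_cancel] at this
  set Φ := fun t => PhiMap 𝒜 Yneg Ypos k l k' l' (a t) (a t).2 (ha' t) with hΦdef
  set Ψ := fun t => PhiMap 𝒜 Yneg Ypos k' l' k l (b t) (hb1 t) (hb2 t) with hΨdef
  set c : Fin n → (𝒜 0) := fun t => ⟨(a t : R) * (b t : R), hc0 t⟩ with hcdef
  have hΦD : ∀ t x, D' (Φ t x) = (a t : R) • D x := fun t x =>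
    D_PhiMap 𝒜 Yneg Ypos Yzero υneg υpos k l k' l' (a t) (a t).2 (ha' t) D hD D' hD' x
  have hΨD : ∀ t x, D (Ψ t x) = (b t : R) • D' x := fun t x =>
    D_PhiMap 𝒜 Yneg Ypos Yzero υneg υpos k' l' k l (b t) (hb1 t) (hb2 t) D' hD' D hD x
  have hΨΦ : ∀ t x, Ψ t (Φ t x) = c t • x := fun t x =>
    PhiMap_comp 𝒜 Yneg Ypos k l k' l' (a t) (a t).2 (ha' t) (b t) (hb1 t) (hb2 t)
      (c t) rfl x
  have hcsum : (∑ t, c t) = (1 : (𝒜 0)) := by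
    refine Subtype.ext ?_
    rw [AddSubmonoidClass.coe_finset_sum]
    simpa using hab
  constructor
  · intro hker
    rw [LinearMap.ker_eq_bot'] at hker ⊢
    intro x hx
    have h1 : ∀ t, Φ t x = 0 := fun t => hker _ (by rw [hΦD t x, hx, smul_zero])
    calc x = (1 : (𝒜 0)) • x := (one_smul (𝒜 0) x).symm
      _ = (∑ t, c t) • x := by rw [hcsum]
      _ = ∑ t, c t • x := Finset.sum_smul
      _ = ∑ t, Ψ t (Φ t x) := by
          refine Finset.sum_congr rfl fun t _ => (hΨΦ t x).symm
      _ = 0 := by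
          refine Finset.sum_eq_zero fun t _ => ?_
          rw [h1 t, map_zero]
  · intro hsurj w
    choose x hx using fun t => hsurj ((b t : R) • w)
    refine ⟨∑ t, Φ t (x t), ?_⟩
    rw [map_sum]
    calc ∑ t, D' (Φ t (x t)) = ∑ t, ((a t : R) * (b t : R)) • w := by
          refine Finset.sum_congr rfl fun t _ => ?_
          rw [hΦD, hx, smul_smul]
      _ = (∑ t, (a t : R) * (b t : R)) • w := (Finset.sum_smul).symm
      _ = w := by rw [hab, one_smul]
set_option synthInstance.maxHeartbeats 1000000 in
set_option maxHeartbeats 1000000 in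
/-- For `k + ℓ = k' + ℓ'`, the `(k,ℓ)`-twisted difference map
`(Y⁻ ⊗[R_{≤0}] R_{≤k}) × (Y⁺ ⊗[R_{≥0}] R_{≥-ℓ}) → Y⁰`,
`(y ⊗ r, z ⊗ s) ↦ r • υ⁻ y - s • υ⁺ z`, has zero kernel if and only if the
`(k',ℓ')`-twisted difference map does, and is surjective if and only if the
`(k',ℓ')`-twisted difference map is. -/
theorem twisted_difference_ker_surjective_iff (h : IsStronglyGraded 𝒜)
    (Yneg Yzero Ypos : Type u)
    [AddCommGroup Yneg] [AddCommGroup Yzero] [AddCommGroup Ypos]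
    [Module (RleSubring 𝒜) Yneg] [Module R Yzero] [Module (RgeSubring 𝒜) Ypos]
    (υneg : Yneg →ₗ[RleSubring 𝒜] Yzero) (υpos : Ypos →ₗ[RgeSubring 𝒜] Yzero)
    (k l k' l' : ℤ) (hkl : k + l = k' + l')
    (D : ((Yneg ⊗[RleSubring 𝒜] Rle 𝒜 k) × (Ypos ⊗[RgeSubring 𝒜] Rge 𝒜 (-l))) →ₗ[𝒜 0] Yzero)
    (hD : ∀ (y : Yneg) (r : Rle 𝒜 k) (z : Ypos) (s : Rge 𝒜 (-l)),
      D (y ⊗ₜ r, z ⊗ₜ s) = (r : R) • υneg y - (s : R) • υpos z)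
    (D' : ((Yneg ⊗[RleSubring 𝒜] Rle 𝒜 k') × (Ypos ⊗[RgeSubring 𝒜] Rge 𝒜 (-l'))) →ₗ[𝒜 0] Yzero)
    (hD' : ∀ (y : Yneg) (r : Rle 𝒜 k') (z : Ypos) (s : Rge 𝒜 (-l')),
      D' (y ⊗ₜ r, z ⊗ₜ s) = (r : R) • υneg y - (s : R) • υpos z) :
    (LinearMap.ker D = ⊥ ↔ LinearMap.ker D' = ⊥) ∧
    (Function.Surjective D ↔ Function.Surjective D') := by
  obtain ⟨h1, s1⟩ := transfer_aux 𝒜 Yneg Ypos Yzero h υneg υpos k l k' l' hkl D hD D' hD'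
  obtain ⟨h2, s2⟩ := transfer_aux 𝒜 Yneg Ypos Yzero h υneg υpos k' l' k l hkl.symm D' hD' D hD
  exact ⟨⟨h2, h1⟩, ⟨s1, s2⟩⟩
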